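/- For every real number s with 0 < s < 2, the function h_s is integrable on the interval (1/2, 1) and ∫_{1/2}^{1} h_s(x) dx < 0. -/

import Mathlib

open MeasureTheory Set Real

private lemma mvt_bound (s : ℝ) (hs0 : 0 < s) {a b : ℝ} (ha : 0 < a) (hab : a < b) :
    a ^ (-s) - b ^ (-s) ≤ s * a ^ (-s - 1) * (b - a) := by
  obtain ⟨c, hc, hderiv⟩ := exists_hasDerivAt_eq_slope (fun x : ℝ => x ^ (-s))
    (fun x : ℝ => (-s) * x ^ (-s - 1)) hab
    (ContinuousOn.rpow_const continuousOn_id (fun x hx => Or.inl (by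
      have : (0:ℝ) < x := lt_of_lt_of_le ha hx.1
      exact this.ne')))
    (fun x hx => Real.hasDerivAt_rpow_const (Or.inl (lt_trans ha hx.1).ne'))
  have hca : a < c := hc.1
  have hc0 : 0 < c := ha.trans hca
  have hb0 : 0 < b := ha.trans hab
  have hba : 0 < b - a := sub_pos.2 hab
  have key : a ^ (-s) - b ^ (-s) = s * c ^ (-s - 1) * (b - a) := by
    have := hderiv
    field_simp at this
    nlinarith [this]
  rw [key]
  have hcc : c ^ (-s - 1) ≤ a ^ (-s - 1) :=
    (Real.rpow_lt_rpow_of_neg ha hca (by linarith)).le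
  have := mul_le_mul_of_nonneg_right (mul_le_mul_of_nonneg_left hcc hs0.le) hba.le
  linarith

private lemma pointwise_bound (s : ℝ) (hs0 : 0 < s) {x : ℝ} (hx : x ∈ Set.Ioo (1/2 : ℝ) 1) :
    |x * (1 - x) / (2 * x - 1) * (x ^ (-s) - (1 - x) ^ (-s))|
      ≤ (4 * s + 2) * (1 - x) ^ (1 - s) := by
  obtain ⟨hx1, hx2⟩ := hx
  have h1x : 0 < 1 - x := by linarith
  have hx0 : 0 < x := by linarith
  have hlt : 1 - x < x := by linarith
  have hden : 0 < 2 * x - 1 := by linarith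
  have hD : (0:ℝ) < (1 - x) ^ (-s) - x ^ (-s) :=
    sub_pos.2 (Real.rpow_lt_rpow_of_neg h1x hlt (neg_neg_of_pos hs0))
  have habs : |x * (1 - x) / (2 * x - 1) * (x ^ (-s) - (1 - x) ^ (-s))|
      = x * (1 - x) / (2 * x - 1) * ((1 - x) ^ (-s) - x ^ (-s)) := by
    rw [abs_mul, abs_of_pos (by positivity : (0:ℝ) < x * (1 - x) / (2 * x - 1)),
      abs_sub_comm, abs_of_pos hD]
  rw [habs]
  have hfact : (1 - x) ^ (1 - s) = (1 - x) * (1 - x) ^ (-s) := by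
    rw [show (1 - s) = 1 + (-s) by ring, Real.rpow_add h1x, Real.rpow_one]
  have hpow_pos : (0:ℝ) < (1 - x) ^ (-s) := Real.rpow_pos_of_pos h1x _
  rcases le_or_gt x (3/4 : ℝ) with hc | hc
  · -- use MVT bound
    have hmvt : (1 - x) ^ (-s) - x ^ (-s) ≤ s * (1 - x) ^ (-s - 1) * (x - (1 - x)) :=
      mvt_bound s hs0 h1x hlt
    have hfact2 : (1 - x) ^ (-s) = (1 - x) * (1 - x) ^ (-s - 1) := by
      nth_rewrite 1 [show (-s : ℝ) = 1 + (-s - 1) by ring]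
      rw [Real.rpow_add h1x, Real.rpow_one]
    have hstep : x * (1 - x) / (2 * x - 1) * ((1 - x) ^ (-s) - x ^ (-s))
        ≤ x * (1 - x) * (s * (1 - x) ^ (-s - 1)) := by
      have := mul_le_mul_of_nonneg_left hmvt
        (le_of_lt (by positivity : (0:ℝ) < x * (1 - x) / (2 * x - 1)))
      calc x * (1 - x) / (2 * x - 1) * ((1 - x) ^ (-s) - x ^ (-s))
          ≤ x * (1 - x) / (2 * x - 1) * (s * (1 - x) ^ (-s - 1) * (x - (1 - x))) := this
        _ = x * (1 - x) * (s * (1 - x) ^ (-s - 1)) := by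
            rw [div_mul_eq_mul_div, div_eq_iff hden.ne']
            ring
    have h4 : (1:ℝ)/4 ≤ 1 - x := by linarith
    have hstep2 : x * (1 - x) * (s * (1 - x) ^ (-s - 1)) = s * x * (1 - x) ^ (-s) := by
      rw [hfact2]; ring
    have hgoal : s * x * (1 - x) ^ (-s) ≤ (4 * s + 2) * (1 - x) ^ (1 - s) := by
      rw [hfact]
      have hxle : s * x ≤ s := by nlinarith
      have : s * x * (1 - x) ^ (-s) ≤ s * (1 - x) ^ (-s) :=
        mul_le_mul_of_nonneg_right hxle hpow_pos.le
      have h2 : (4 * s + 2) * ((1 - x) * (1 - x) ^ (-s))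
          = ((4 * s + 2) * (1 - x)) * (1 - x) ^ (-s) := by ring
      rw [h2]
      have : s ≤ (4 * s + 2) * (1 - x) := by nlinarith
      nlinarith [mul_le_mul_of_nonneg_right this hpow_pos.le,
        mul_le_mul_of_nonneg_right hxle hpow_pos.le]
    linarith [hstep, hstep2 ▸ hstep, hgoal]
  · -- x > 3/4 : denominator bounded below
    have hden2 : (1:ℝ)/2 < 2 * x - 1 := by linarith
    have hbound1 : x * (1 - x) / (2 * x - 1) ≤ 2 * (1 - x) := by
      rw [div_le_iff₀ hden]
      nlinarith
    have hbound2 : (1 - x) ^ (-s) - x ^ (-s) ≤ (1 - x) ^ (-s) := by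
      have : (0:ℝ) ≤ x ^ (-s) := (Real.rpow_pos_of_pos hx0 _).le
      linarith
    calc x * (1 - x) / (2 * x - 1) * ((1 - x) ^ (-s) - x ^ (-s))
        ≤ 2 * (1 - x) * (1 - x) ^ (-s) := by
          apply mul_le_mul hbound1 hbound2 hD.le (by positivity)
      _ = 2 * (1 - x) ^ (1 - s) := by rw [hfact]; ring
      _ ≤ (4 * s + 2) * (1 - x) ^ (1 - s) := by
          apply mul_le_mul_of_nonneg_right (by linarith) (Real.rpow_pos_of_pos h1x _).le

/-- For every real `s` with `0 < s < 2`, the function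
`h_s(x) = [x(1−x)/(2x−1)]·(x^{−s} − (1−x)^{−s})` is integrable on `(1/2, 1)` and
`∫_{1/2}^1 h_s(x) dx < 0`. -/
theorem stmt2 (s : ℝ) (hs0 : 0 < s) (hs2 : s < 2) :
    MeasureTheory.IntegrableOn
        (fun x : ℝ => x * (1 - x) / (2 * x - 1) * (x ^ (-s) - (1 - x) ^ (-s)))
        (Set.Ioo (1 / 2 : ℝ) 1) ∧
      (∫ x in Set.Ioo (1 / 2 : ℝ) 1,
        x * (1 - x) / (2 * x - 1) * (x ^ (-s) - (1 - x) ^ (-s))) < 0 := by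
  set f : ℝ → ℝ := fun x => x * (1 - x) / (2 * x - 1) * (x ^ (-s) - (1 - x) ^ (-s)) with hf
  -- continuity on Ioo
  have hcont : ContinuousOn f (Set.Ioo (1/2 : ℝ) 1) := by
    apply ContinuousOn.mul
    · apply ContinuousOn.div
      · fun_prop
      · fun_prop
      · intro x hx
        have : (0:ℝ) < 2 * x - 1 := by
          have := hx.1; simp only [Set.mem_Ioo] at hx; linarith [hx.1]
        exact this.ne'
    · apply ContinuousOn.sub
      · apply ContinuousOn.rpow_const continuousOn_id
        intro x hx
        exact Or.inl (by simp only [Set.mem_Ioo] at hx; intro h; rw [id] at h; linarith [hx.1])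
      · apply ContinuousOn.rpow_const (by fun_prop)
        intro x hx
        exact Or.inl (by simp only [Set.mem_Ioo] at hx; intro h; linarith [hx.2, sub_eq_zero.mp h])
  have hmeas : AEStronglyMeasurable f (volume.restrict (Set.Ioo (1/2 : ℝ) 1)) :=
    hcont.aestronglyMeasurable measurableSet_Ioo
  -- majorant integrable
  have hmaj : IntegrableOn (fun x : ℝ => (4 * s + 2) * (1 - x) ^ (1 - s))
      (Set.Ioo (1/2 : ℝ) 1) := by
    have h1 : IntervalIntegrable (fun x : ℝ => x ^ (1 - s)) volume (1/2 : ℝ) 0 :=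
      intervalIntegral.intervalIntegrable_rpow' (by linarith)
    have h2 := h1.comp_sub_left 1
    norm_num at h2
    rw [intervalIntegrable_iff_integrableOn_Ioo_of_le (by norm_num)] at h2
    exact (h2.const_mul _)
  have hint : IntegrableOn f (Set.Ioo (1/2 : ℝ) 1) := by
    apply hmaj.mono' hmeas
    rw [ae_restrict_iff' measurableSet_Ioo]
    filter_upwards with x hx
    rw [Real.norm_eq_abs]; exact pointwise_bound s hs0 hx
  refine ⟨hint, ?_⟩
  -- negativity
  have hneg : ∀ x ∈ Set.Ioo (1/2 : ℝ) 1, f x < 0 := by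
    intro x hx
    simp only [Set.mem_Ioo] at hx
    have h1x : 0 < 1 - x := by linarith [hx.2]
    have hlt : 1 - x < x := by linarith [hx.1]
    have hD : x ^ (-s) - (1 - x) ^ (-s) < 0 :=
      sub_neg.2 (Real.rpow_lt_rpow_of_neg h1x hlt (neg_neg_of_pos hs0))
    have hpos : (0:ℝ) < x * (1 - x) / (2 * x - 1) := by
      have h1 : (0:ℝ) < 2 * x - 1 := by linarith [hx.1]
      have h2 : (0:ℝ) < x := by linarith [hx.1]
      positivity
    exact mul_neg_of_pos_of_neg hpos hD
  have key : (0:ℝ) < ∫ x in Set.Ioo (1/2 : ℝ) 1, (-f) x := by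
    rw [setIntegral_pos_iff_support_of_nonneg_ae]
    · apply lt_of_lt_of_le _ (measure_mono (_ : Set.Ioo (1/2 : ℝ) 1 ⊆
        Function.support (-f) ∩ Set.Ioo (1/2 : ℝ) 1))
      · rw [Real.volume_Ioo]; norm_num
      · intro x hx
        refine ⟨?_, hx⟩
        simp only [Function.mem_support, Pi.neg_apply, ne_eq, neg_eq_zero]
        exact (hneg x hx).ne
    · rw [Filter.EventuallyLE, ae_restrict_iff' measurableSet_Ioo]
      filter_upwards with x hx
      simpa using (hneg x hx).le
    · exact hint.neg
  simp only [Pi.neg_apply] at key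
  rw [integral_neg] at key
  linarith
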